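/- Let z₁,…,zₙ be nonzero complex numbers and let w̃ ∈ {1,-1}ⁿ maximize |∑ᵢ wᵢ zᵢ| over all w ∈ {1,-1}ⁿ, with s̃ = ∑ᵢ w̃ᵢ zᵢ. If Re(s̃ · conj(zⱼ)) > 0 then w̃ⱼ = 1, and if Re(s̃ · conj(zⱼ)) < 0 then w̃ⱼ = -1. -/

import Mathlib

theorem stmt2 (n : ℕ) (z : Fin n → ℂ) (hz : ∀ i, z i ≠ 0)
    (w : Fin n → ℝ) (hw : ∀ i, w i = 1 ∨ w i = -1)
    (hopt : ∀ v : Fin n → ℝ, (∀ i, v i = 1 ∨ v i = -1) →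
      ‖∑ i, (v i : ℂ) * z i‖ ≤ ‖∑ i, (w i : ℂ) * z i‖)
    (j : Fin n) :
    (0 < ((∑ i, (w i : ℂ) * z i) * (starRingEnd ℂ) (z j)).re → w j = 1) ∧
    (((∑ i, (w i : ℂ) * z i) * (starRingEnd ℂ) (z j)).re < 0 → w j = -1) := by
  set s : ℂ := ∑ i, (w i : ℂ) * z i with hs
  have hwj2 : w j ^ 2 = 1 := by rcases hw j with h | h <;> rw [h] <;> ring
  have hkey : 0 < w j * (s * (starRingEnd ℂ) (z j)).re := by
    set v : Fin n → ℝ := Function.update w j (-(w j)) with hv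
    have hv1 : ∀ i, v i = 1 ∨ v i = -1 := by
      intro i
      rcases eq_or_ne i j with rfl | h
      · simp only [hv, Function.update_self]
        rcases hw i with h | h <;> simp [h]
      · simpa only [hv, Function.update_of_ne h] using hw i
    have hsum : ∑ i, (v i : ℂ) * z i = s - 2 * (w j : ℂ) * z j := by
      have h1 : ∀ i ∈ Finset.univ, (v i : ℂ) * z i
          = (w i : ℂ) * z i + (if i = j then -(2 * (w j : ℂ) * z j) else 0) := by
        intro i _
        rcases eq_or_ne i j with rfl | h
        · simp only [hv, Function.update_self, if_pos rfl]
          push_cast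
          ring
        · simp [hv, Function.update_of_ne h, h]
      rw [Finset.sum_congr rfl h1, Finset.sum_add_distrib, Finset.sum_ite_eq' Finset.univ j]
      simp [hs]
      ring
    have habs := hopt v hv1
    rw [hsum] at habs
    have hsq : Complex.normSq (s - 2 * (w j : ℂ) * z j) ≤ Complex.normSq s := by
      rw [← Complex.sq_norm, ← Complex.sq_norm]
      exact pow_le_pow_left₀ (norm_nonneg _) habs 2
    rw [Complex.normSq_sub] at hsq
    have hconj : (starRingEnd ℂ) (2 * (w j : ℂ) * z j) = 2 * (w j : ℂ) * (starRingEnd ℂ) (z j) := by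
      have h2 : (starRingEnd ℂ) 2 = 2 := by
        rw [Complex.conj_eq_iff_im]
        norm_num
      rw [map_mul, map_mul, Complex.conj_ofReal, h2]
    have hre : (s * (starRingEnd ℂ) (2 * (w j : ℂ) * z j)).re
        = 2 * (w j * (s * (starRingEnd ℂ) (z j)).re) := by
      rw [hconj]
      have : s * (2 * (w j : ℂ) * (starRingEnd ℂ) (z j))
          = ((2 * w j : ℝ) : ℂ) * (s * (starRingEnd ℂ) (z j)) := by push_cast; ring
      rw [this, Complex.re_ofReal_mul]
      ring
    have hnsq : Complex.normSq (2 * (w j : ℂ) * z j) = 4 * Complex.normSq (z j) := by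
      simp only [Complex.normSq_mul, Complex.normSq_ofReal]
      have : Complex.normSq 2 = 4 := by norm_num [Complex.normSq]
      rw [this]
      rcases hw j with h | h <;> rw [h] <;> ring
    rw [hre, hnsq] at hsq
    have hzj : 0 < Complex.normSq (z j) := Complex.normSq_pos.mpr (hz j)
    nlinarith
  constructor
  · intro h
    rcases hw j with h1 | h1
    · exact h1
    · rw [h1] at hkey; nlinarith
  · intro h
    rcases hw j with h1 | h1
    · rw [h1] at hkey; nlinarith
    · exact h1
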